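/- For every a ≠ 0, the function ℓ(r) := ((r² + a²)²/(2a²))·arctan(a/r) − r³/(2a) − 5·a·r/6 tends to 0 as r → ∞. Consequently the angular-momentum charge Q_φ = M(v)·a − M′(v)·ℓ(r) of Kerr–Vaidya spacetime converges to the angular momentum L_Kerr = M(v)·a of the stationary Kerr metric in the asymptotically flat region r → ∞. -/
import Mathlib

noncomputable section

open Real Filter

/-- The deviation of the angular-momentum Noether charge of Kerr–Vaidya spacetime
from `M(v)·a`, per unit of `M′(v)`. -/
def ellKV (a r : ℝ) : ℝ :=
  (r ^ 2 + a ^ 2) ^ 2 / (2 * a ^ 2) * Real.arctan (a / r) - r ^ 3 / (2 * a) - 5 * a * r / 6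

lemma arctan_remainder_bound (y : ℝ) :
    |Real.arctan y - y + y ^ 3 / 3 - y ^ 5 / 5| ≤ |y| ^ 7 := by
  set g : ℝ → ℝ := fun t => Real.arctan t - t + t ^ 3 / 3 - t ^ 5 / 5 with hg
  have hderiv : ∀ t : ℝ, HasDerivAt g (-(t ^ 6) / (1 + t ^ 2)) t := by
    intro t
    have h1 : HasDerivAt g (1 / (1 + t ^ 2) - 1 + (3 : ℕ) * t ^ 2 / 3 - (5 : ℕ) * t ^ 4 / 5) t := by
      exact (((Real.hasDerivAt_arctan t).sub (hasDerivAt_id t)).add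
        ((hasDerivAt_pow 3 t).div_const 3)).sub ((hasDerivAt_pow 5 t).div_const 5)
    convert h1 using 1
    have ht : (1 : ℝ) + t ^ 2 ≠ 0 := by positivity
    field_simp
    ring
  have hbound : ∀ t ∈ Set.uIcc (0 : ℝ) y, ‖-(t ^ 6) / (1 + t ^ 2)‖ ≤ |y| ^ 6 := by
    intro t ht
    have ht1 : (1 : ℝ) ≤ 1 + t ^ 2 := by nlinarith [sq_nonneg t]
    have habs : |t| ≤ |y| := by
      rw [Set.mem_uIcc] at ht
      rcases ht with ⟨h1, h2⟩ | ⟨h1, h2⟩ <;> rw [abs_le] <;>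
        constructor <;> nlinarith [abs_nonneg y, le_abs_self y, neg_abs_le y]
    calc ‖-(t ^ 6) / (1 + t ^ 2)‖ = t ^ 6 / (1 + t ^ 2) := by
          rw [Real.norm_eq_abs, abs_div, abs_neg, abs_of_nonneg (by positivity : (0:ℝ) ≤ t ^ 6),
            abs_of_pos (by positivity : (0:ℝ) < 1 + t ^ 2)]
      _ ≤ t ^ 6 := by
          apply div_le_self (by positivity) ht1
      _ = |t| ^ 6 := by rw [← abs_pow]; exact (abs_of_nonneg (by positivity)).symm
      _ ≤ |y| ^ 6 := by gcongr
  have := Convex.norm_image_sub_le_of_norm_hasDerivWithin_le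
    (fun t ht => (hderiv t).hasDerivWithinAt) hbound (convex_uIcc 0 y)
    (Set.left_mem_uIcc) (Set.right_mem_uIcc)
  have hg0 : g 0 = 0 := by simp [hg]
  calc |Real.arctan y - y + y ^ 3 / 3 - y ^ 5 / 5| = ‖g y - g 0‖ := by
        rw [hg0]; simp [hg]
    _ ≤ |y| ^ 6 * ‖y - (0:ℝ)‖ := this
    _ = |y| ^ 7 := by rw [Real.norm_eq_abs]; simp; ring

/-- For every `a ≠ 0`, `ℓ(r) → 0` as `r → ∞`; consequently the angular-momentum charge
`Q_φ = M(v)·a − M′(v)·ℓ(r)` of Kerr–Vaidya spacetime converges to the angular momentum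
`L_Kerr = M(v)·a` of the stationary Kerr metric in the asymptotically flat region. -/
theorem ellKV_tendsto_zero (a : ℝ) (ha : a ≠ 0) :
    Tendsto (fun r : ℝ => ellKV a r) atTop (nhds 0) ∧
      ∀ (M : ℝ → ℝ) (v : ℝ),
        Tendsto (fun r : ℝ => M v * a - deriv M v * ellKV a r) atTop (nhds (M v * a)) := by
  have key : Tendsto (fun r : ℝ => ellKV a r) atTop (nhds 0) := by
    set g : ℝ → ℝ := fun t => Real.arctan t - t + t ^ 3 / 3 - t ^ 5 / 5 with hg
    have hdecomp : ∀ᶠ r : ℝ in atTop, ellKV a r =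
        (4 * a ^ 3 / (15 * r) + a ^ 5 / (30 * r ^ 3) + a ^ 7 / (10 * r ^ 5)) +
          (r ^ 2 + a ^ 2) ^ 2 / (2 * a ^ 2) * g (a / r) := by
      filter_upwards [eventually_gt_atTop (0 : ℝ)] with r hr
      have hr' : r ≠ 0 := ne_of_gt hr
      simp only [ellKV, hg]
      field_simp
      ring
    -- polynomial tail tends to 0
    have hP : Tendsto (fun r : ℝ =>
        4 * a ^ 3 / (15 * r) + a ^ 5 / (30 * r ^ 3) + a ^ 7 / (10 * r ^ 5)) atTop (nhds 0) := by
      have h1 : Tendsto (fun r : ℝ => 4 * a ^ 3 / (15 * r)) atTop (nhds 0) :=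
        Tendsto.div_atTop tendsto_const_nhds (tendsto_id.const_mul_atTop (by norm_num))
      have h3 : Tendsto (fun r : ℝ => a ^ 5 / (30 * r ^ 3)) atTop (nhds 0) :=
        Tendsto.div_atTop tendsto_const_nhds
          ((tendsto_pow_atTop (by norm_num)).const_mul_atTop (by norm_num))
      have h5 : Tendsto (fun r : ℝ => a ^ 7 / (10 * r ^ 5)) atTop (nhds 0) :=
        Tendsto.div_atTop tendsto_const_nhds
          ((tendsto_pow_atTop (by norm_num)).const_mul_atTop (by norm_num))
      simpa using (h1.add h3).add h5
    -- remainder tends to 0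
    have hR : Tendsto (fun r : ℝ =>
        (r ^ 2 + a ^ 2) ^ 2 / (2 * a ^ 2) * g (a / r)) atTop (nhds 0) := by
      apply squeeze_zero_norm' (a := fun r : ℝ =>
        |a| ^ 7 / (2 * a ^ 2) * (1 / r ^ 3 + 2 * a ^ 2 / r ^ 5 + a ^ 4 / r ^ 7))
      · filter_upwards [eventually_gt_atTop (0 : ℝ)] with r hr
        have hr' : r ≠ 0 := ne_of_gt hr
        have hQ : (0:ℝ) ≤ (r ^ 2 + a ^ 2) ^ 2 / (2 * a ^ 2) := by positivity
        have hgb : |g (a / r)| ≤ |a| ^ 7 / r ^ 7 := by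
          have := arctan_remainder_bound (a / r)
          calc |g (a / r)| ≤ |a / r| ^ 7 := this
            _ = |a| ^ 7 / r ^ 7 := by
                rw [abs_div, abs_of_pos hr, div_pow]
        calc ‖(r ^ 2 + a ^ 2) ^ 2 / (2 * a ^ 2) * g (a / r)‖
            = (r ^ 2 + a ^ 2) ^ 2 / (2 * a ^ 2) * |g (a / r)| := by
              rw [Real.norm_eq_abs, abs_mul, abs_of_nonneg hQ]
          _ ≤ (r ^ 2 + a ^ 2) ^ 2 / (2 * a ^ 2) * (|a| ^ 7 / r ^ 7) := by gcongr
          _ = |a| ^ 7 / (2 * a ^ 2) * (1 / r ^ 3 + 2 * a ^ 2 / r ^ 5 + a ^ 4 / r ^ 7) := by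
              field_simp
              ring
      · have h1 : Tendsto (fun r : ℝ => 1 / r ^ 3) atTop (nhds 0) :=
          Tendsto.div_atTop tendsto_const_nhds (tendsto_pow_atTop (by norm_num))
        have h2 : Tendsto (fun r : ℝ => 2 * a ^ 2 / r ^ 5) atTop (nhds 0) :=
          Tendsto.div_atTop tendsto_const_nhds (tendsto_pow_atTop (by norm_num))
        have h3 : Tendsto (fun r : ℝ => a ^ 4 / r ^ 7) atTop (nhds 0) :=
          Tendsto.div_atTop tendsto_const_nhds (tendsto_pow_atTop (by norm_num))
        simpa using (((h1.add h2).add h3).const_mul (|a| ^ 7 / (2 * a ^ 2)))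
    have := (hP.add hR)
    rw [add_zero] at this
    exact this.congr' (by filter_upwards [hdecomp] with r h using h.symm)
  refine ⟨key, fun M v => ?_⟩
  have h2 := key.const_mul (deriv M v)
  have h3 := (tendsto_const_nhds :
    Tendsto (fun _ : ℝ => M v * a) atTop (nhds (M v * a))).sub h2
  simpa using h3
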